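/- Let ν ≥ 0 with support projection Π_ν, let Π be an orthogonal projection with ΠΠ_ν = Π, and set P := Π_{ν^{-1/2}Πν^{-1/2}} (the projection onto the range of ν^{-1/2}Πν^{-1/2}, using the pseudoinverse square root). Then for any positive semidefinite ζ, the following are equivalent: (1) ν^{1/2}ζν^{1/2} is invariant under Π (i.e. Π ν^{1/2}ζν^{1/2} Π = ν^{1/2}ζν^{1/2}); (2) Π_νζΠ_ν is invariant under P; (3) ζ is invariant under I − Π_ν + P. -/

import Mathlib

open Matrix
open scoped ComplexOrder

/-- `P` is an orthogonal projection matrix. -/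
def IsOrthProj {n : ℕ} (P : Matrix (Fin n) (Fin n) ℂ) : Prop :=
  P.IsHermitian ∧ P * P = P

/-- `P` is the orthogonal projection onto the range (support) of `ν`. -/
def IsSupportProj {n : ℕ} (ν P : Matrix (Fin n) (Fin n) ℂ) : Prop :=
  IsOrthProj P ∧ LinearMap.range P.mulVecLin = LinearMap.range ν.mulVecLin

/-- `νinv` is the Moore–Penrose pseudoinverse of the PSD matrix `ν`,
where `Pnu` is the support projection of `ν`. -/
def IsPseudoInv {n : ℕ} (ν νinv Pnu : Matrix (Fin n) (Fin n) ℂ) : Prop :=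
  νinv.PosSemidef ∧ νinv * ν = Pnu ∧ ν * νinv = Pnu ∧ Pnu * νinv = νinv


lemma aux_eq_zero_of_mulVec {n : ℕ} {M : Matrix (Fin n) (Fin n) ℂ}
    (h : ∀ v, M *ᵥ v = 0) : M = 0 := by
  ext i j
  have := congrFun (h (Pi.single j 1)) i
  simpa [Matrix.mulVec_single] using this

/-- If `range B ≤ range C` and `M * C = 0` then `M * B = 0`. -/
lemma aux_mul_eq_zero_of_range_le {n : ℕ} {M B C : Matrix (Fin n) (Fin n) ℂ}
    (hr : LinearMap.range B.mulVecLin ≤ LinearMap.range C.mulVecLin)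
    (h : M * C = 0) : M * B = 0 := by
  apply aux_eq_zero_of_mulVec
  intro v
  obtain ⟨w, hw⟩ := hr ⟨v, rfl⟩
  have hw' : C *ᵥ w = B *ᵥ v := hw
  have : (M * B) *ᵥ v = (M * C) *ᵥ w := by
    rw [← Matrix.mulVec_mulVec, ← Matrix.mulVec_mulVec, hw']
  rw [this, h, Matrix.zero_mulVec]

open scoped MatrixOrder in
/-- For PSD `X`: `Bᴴ X B = 0 ↔ X B = 0`. -/
lemma aux_psd_conj_zero_iff {n : ℕ} {X B : Matrix (Fin n) (Fin n) ℂ}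
    (hX : X.PosSemidef) : Bᴴ * X * B = 0 ↔ X * B = 0 := by
  constructor
  · intro h
    have hsq : CFC.sqrt X * CFC.sqrt X = X := CFC.sqrt_mul_sqrt_self X hX.nonneg
    have hherm : (CFC.sqrt X).conjTranspose = CFC.sqrt X := (CFC.sqrt_nonneg X).posSemidef.1
    have h2 : (CFC.sqrt X * B)ᴴ * (CFC.sqrt X * B) = 0 := by
      rw [Matrix.conjTranspose_mul, hherm]
      calc Bᴴ * CFC.sqrt X * (CFC.sqrt X * B) = Bᴴ * (CFC.sqrt X * CFC.sqrt X) * B := by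
            simp only [Matrix.mul_assoc]
        _ = 0 := by rw [hsq, h]
    have h3 : CFC.sqrt X * B = 0 := Matrix.conjTranspose_mul_self_eq_zero.mp h2
    calc X * B = CFC.sqrt X * (CFC.sqrt X * B) := by rw [← Matrix.mul_assoc, hsq]
      _ = 0 := by rw [h3, Matrix.mul_zero]
  · intro h
    rw [Matrix.mul_assoc, h, Matrix.mul_zero]

/-- Key: for PSD `ζ`, projection `Q`: `Q(BᴴζB)Q = BᴴζB ↔ ζBQ = ζB`. -/
lemma aux_key {n : ℕ} {ζ B Q : Matrix (Fin n) (Fin n) ℂ} (hζ : ζ.PosSemidef)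
    (hQh : Qᴴ = Q) (hQ2 : Q * Q = Q) :
    Q * (Bᴴ * ζ * B) * Q = Bᴴ * ζ * B ↔ ζ * B * Q = ζ * B := by
  have hXpsd : (Bᴴ * ζ * B).PosSemidef := hζ.conjTranspose_mul_mul_same B
  constructor
  · intro h
    have h0 : (1 - Q) * (Bᴴ * ζ * B) * (1 - Q) = 0 := by
      rw [← h]
      have : (1 - Q) * Q = 0 := by rw [Matrix.sub_mul, Matrix.one_mul, hQ2, sub_self]
      calc (1 - Q) * (Q * (Bᴴ * ζ * B) * Q) * (1 - Q)
          = ((1 - Q) * Q) * (Bᴴ * ζ * B) * (Q * (1 - Q)) := by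
            simp only [Matrix.mul_assoc]
        _ = 0 := by
            rw [this, Matrix.zero_mul, Matrix.zero_mul]
    have h1 : (B * (1 - Q))ᴴ * ζ * (B * (1 - Q)) = 0 := by
      rw [Matrix.conjTranspose_mul]
      have hQh' : (1 - Q)ᴴ = 1 - Q := by
        rw [Matrix.conjTranspose_sub, hQh, Matrix.conjTranspose_one]
      rw [hQh']
      calc (1 - Q) * Bᴴ * ζ * (B * (1 - Q))
          = (1 - Q) * (Bᴴ * ζ * B) * (1 - Q) := by simp only [Matrix.mul_assoc]
        _ = 0 := h0
    have h2 : ζ * (B * (1 - Q)) = 0 := (aux_psd_conj_zero_iff hζ).mp h1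
    have h3 : ζ * B * (1 - Q) = 0 := by rw [Matrix.mul_assoc]; exact h2
    rw [Matrix.mul_sub, Matrix.mul_one, sub_eq_zero] at h3
    exact h3.symm
  · intro h
    have hXQ : (Bᴴ * ζ * B) * Q = Bᴴ * ζ * B := by
      calc (Bᴴ * ζ * B) * Q = Bᴴ * (ζ * B * Q) := by simp only [Matrix.mul_assoc]
        _ = Bᴴ * (ζ * B) := by rw [h]
        _ = Bᴴ * ζ * B := by rw [Matrix.mul_assoc]
    have hQX : Q * (Bᴴ * ζ * B) = Bᴴ * ζ * B := by
      have := congrArg Matrix.conjTranspose hXQ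
      rwa [Matrix.conjTranspose_mul, hQh, hXpsd.1.eq] at this
    rw [Matrix.mul_assoc Q, hXQ, hQX]

/-- Let `s = ν^{1/2}` (PSD square root of `ν`), `sinv = ν^{-1/2}` its
pseudoinverse, `Π` an orthogonal projection with `ΠΠ_ν = Π`, and `P` the
projection onto the range of `ν^{-1/2}Πν^{-1/2}`.  Then for PSD `ζ`, the
following are equivalent:
`Π(ν^{1/2}ζν^{1/2})Π = ν^{1/2}ζν^{1/2}`;  `P(Π_νζΠ_ν)P = Π_νζΠ_ν`;
`(I − Π_ν + P)ζ(I − Π_ν + P) = ζ`. -/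
theorem stmt_12 {n : ℕ} (ν ζ : Matrix (Fin n) (Fin n) ℂ)
    (hν : ν.PosSemidef) (hζ : ζ.PosSemidef)
    (Pnu : Matrix (Fin n) (Fin n) ℂ) (hPnu : IsSupportProj ν Pnu)
    (s : Matrix (Fin n) (Fin n) ℂ) (hs : s.PosSemidef) (hs2 : s * s = ν)
    (sinv : Matrix (Fin n) (Fin n) ℂ) (hsinv : IsPseudoInv s sinv Pnu)
    (Pi : Matrix (Fin n) (Fin n) ℂ) (hPi : IsOrthProj Pi)
    (hPisub : Pi * Pnu = Pi)
    (P : Matrix (Fin n) (Fin n) ℂ)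
    (hP : IsSupportProj (sinv * Pi * sinv) P) :
    (Pi * (s * ζ * s) * Pi = s * ζ * s ↔
        P * (Pnu * ζ * Pnu) * P = Pnu * ζ * Pnu) ∧
      (P * (Pnu * ζ * Pnu) * P = Pnu * ζ * Pnu ↔
        (1 - Pnu + P) * ζ * (1 - Pnu + P) = ζ) := by
  set A : Matrix (Fin n) (Fin n) ℂ := sinv * Pi * sinv with hA
  -- basic facts
  have hPnuH : Pnuᴴ = Pnu := hPnu.1.1
  have hPnu2 : Pnu * Pnu = Pnu := hPnu.1.2
  have hPiH : Piᴴ = Pi := hPi.1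
  have hPi2 : Pi * Pi = Pi := hPi.2
  have hPH : Pᴴ = P := hP.1.1
  have hP2 : P * P = P := hP.1.2
  have hsH : sᴴ = s := hs.1
  have hsinvH : sinvᴴ = sinv := hsinv.1.1
  have hsinvs : sinv * s = Pnu := hsinv.2.1
  have hssinv : s * sinv = Pnu := hsinv.2.2.1
  have hPnusinv : Pnu * sinv = sinv := hsinv.2.2.2
  have hsinvPnu : sinv * Pnu = sinv := by
    have := congrArg Matrix.conjTranspose hPnusinv
    rwa [Matrix.conjTranspose_mul, hPnuH, hsinvH] at this
  -- Pnu * ν = ν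
  have hPnuNu : Pnu * ν = ν := by
    have h0 : (Pnu - 1) * Pnu = 0 := by
      rw [Matrix.sub_mul, Matrix.one_mul, hPnu2, sub_self]
    have := aux_mul_eq_zero_of_range_le hPnu.2.ge h0
    rw [Matrix.sub_mul, Matrix.one_mul, sub_eq_zero] at this
    exact this
  have hNuPnu : ν * Pnu = ν := by
    have := congrArg Matrix.conjTranspose hPnuNu
    rwa [Matrix.conjTranspose_mul, hPnuH, hν.1.eq] at this
  -- s * Pnu = s
  have hsPnu : s * Pnu = s := by
    have h0 : (s * (1 - Pnu))ᴴ * (s * (1 - Pnu)) = 0 := by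
      rw [Matrix.conjTranspose_mul]
      have h1 : (1 - Pnu)ᴴ = 1 - Pnu := by
        rw [Matrix.conjTranspose_sub, hPnuH, Matrix.conjTranspose_one]
      rw [h1, hsH]
      calc (1 - Pnu) * s * (s * (1 - Pnu))
          = (1 - Pnu) * (ν * (1 - Pnu)) := by
            rw [Matrix.mul_assoc, ← Matrix.mul_assoc s s, hs2]
        _ = 0 := by
            rw [Matrix.mul_sub, Matrix.mul_one, hNuPnu, sub_self, Matrix.mul_zero]
    have h2 : s * (1 - Pnu) = 0 := Matrix.conjTranspose_mul_self_eq_zero.mp h0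
    rw [Matrix.mul_sub, Matrix.mul_one, sub_eq_zero] at h2
    exact h2.symm
  have hPnus : Pnu * s = s := by
    have := congrArg Matrix.conjTranspose hsPnu
    rwa [Matrix.conjTranspose_mul, hPnuH, hsH] at this
  -- Pnu * Pi = Pi
  have hPnuPi : Pnu * Pi = Pi := by
    have := congrArg Matrix.conjTranspose hPisub
    rwa [Matrix.conjTranspose_mul, hPnuH, hPiH] at this
  -- A facts
  have hAH : Aᴴ = A := by
    rw [hA, Matrix.conjTranspose_mul, Matrix.conjTranspose_mul, hsinvH, hPiH,
      Matrix.mul_assoc]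
  have hPA : P * A = A := by
    have h0 : (P - 1) * P = 0 := by
      rw [Matrix.sub_mul, Matrix.one_mul, hP2, sub_self]
    have := aux_mul_eq_zero_of_range_le hP.2.ge h0
    rw [Matrix.sub_mul, Matrix.one_mul, sub_eq_zero] at this
    exact this
  have hAP : A * P = A := by
    have := congrArg Matrix.conjTranspose hPA
    rwa [Matrix.conjTranspose_mul, hPH, hAH] at this
  have hPnuA : Pnu * A = A := by
    rw [hA, ← Matrix.mul_assoc, ← Matrix.mul_assoc, hPnusinv]
  have hAPnu : A * Pnu = A := by
    have := congrArg Matrix.conjTranspose hPnuA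
    rwa [Matrix.conjTranspose_mul, hPnuH, hAH] at this
  have hPnuP : Pnu * P = P := by
    have h0 : (Pnu - 1) * A = 0 := by
      rw [Matrix.sub_mul, Matrix.one_mul, hPnuA, sub_self]
    have := aux_mul_eq_zero_of_range_le hP.2.le h0
    rw [Matrix.sub_mul, Matrix.one_mul, sub_eq_zero] at this
    exact this
  have hPPnu : P * Pnu = P := by
    have := congrArg Matrix.conjTranspose hPnuP
    rwa [Matrix.conjTranspose_mul, hPnuH, hPH] at this
  -- s * A = Pi * sinv
  have hsA : s * A = Pi * sinv := by
    rw [hA, ← Matrix.mul_assoc, ← Matrix.mul_assoc, hssinv, hPnuPi]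
  -- s * A * s = Pi
  have hsAs : s * A * s = Pi := by
    rw [hsA, Matrix.mul_assoc, hsinvs, hPisub]
  -- s * Pi * sinv = ν * A
  have hsPisinv : s * Pi * sinv = ν * A := by
    calc s * Pi * sinv = s * (s * A * s) * sinv := by rw [hsAs]
      _ = (s * s) * A * (s * sinv) := by simp only [Matrix.mul_assoc]
      _ = ν * A := by rw [hs2, hssinv, Matrix.mul_assoc, hAPnu]
  -- Pi * (s * P) = s * P
  have hPisP : Pi * s * P = s * P := by
    have h0 : (Pi * s - s) * A = 0 := by
      rw [Matrix.sub_mul, Matrix.mul_assoc, hsA, ← Matrix.mul_assoc, hPi2, sub_self]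
    have := aux_mul_eq_zero_of_range_le hP.2.le h0
    rw [Matrix.sub_mul, sub_eq_zero] at this
    exact this
  have hPsPi : P * s * Pi = P * s := by
    have := congrArg Matrix.conjTranspose hPisP
    rwa [Matrix.conjTranspose_mul, Matrix.conjTranspose_mul, Matrix.conjTranspose_mul,
      hPiH, hsH, hPH, ← Matrix.mul_assoc] at this
  -- the three reductions
  have E1 : Pi * (s * ζ * s) * Pi = s * ζ * s ↔ ζ * s * Pi = ζ * s := by
    have := aux_key (B := s) hζ hPiH hPi2
    rwa [hsH] at this
  have E2 : P * (Pnu * ζ * Pnu) * P = Pnu * ζ * Pnu ↔ ζ * Pnu * P = ζ * Pnu := by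
    have := aux_key (B := Pnu) hζ hPH hP2
    rwa [hPnuH] at this
  have hQH : (1 - Pnu + P)ᴴ = 1 - Pnu + P := by
    rw [Matrix.conjTranspose_add, Matrix.conjTranspose_sub, Matrix.conjTranspose_one,
      hPnuH, hPH]
  have hQ2 : (1 - Pnu + P) * (1 - Pnu + P) = 1 - Pnu + P := by
    simp only [Matrix.mul_add, Matrix.add_mul, Matrix.mul_sub, Matrix.sub_mul,
      Matrix.mul_one, Matrix.one_mul, hPnu2, hPnuP, hPPnu, hP2]
    abel
  have E3 : (1 - Pnu + P) * ζ * (1 - Pnu + P) = ζ ↔ ζ * (1 - Pnu + P) = ζ := by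
    have := aux_key (B := (1 : Matrix (Fin n) (Fin n) ℂ)) hζ hQH hQ2
    simpa only [Matrix.conjTranspose_one, Matrix.mul_one, Matrix.one_mul] using this
  -- core equivalences
  have C2 : (ζ * Pnu * P = ζ * Pnu) ↔ ζ * Pnu = ζ * P := by
    rw [Matrix.mul_assoc, hPnuP]
    exact eq_comm
  have C3 : (ζ * (1 - Pnu + P) = ζ) ↔ ζ * Pnu = ζ * P := by
    rw [Matrix.mul_add, Matrix.mul_sub, Matrix.mul_one]
    constructor
    · intro h
      have h' : ζ * P - ζ * Pnu = 0 := by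
        have : ζ - ζ * Pnu + ζ * P - ζ = ζ * P - ζ * Pnu := by abel
        rw [← this, h, sub_self]
      rw [sub_eq_zero] at h'
      exact h'.symm
    · intro h
      rw [h]
      abel
  have C1 : (ζ * s * Pi = ζ * s) ↔ ζ * Pnu = ζ * P := by
    constructor
    · intro h1
      have e1 : ζ * Pnu = ζ * (ν * A) := by
        calc ζ * Pnu = ζ * s * sinv := by rw [Matrix.mul_assoc, hssinv]
          _ = ζ * s * Pi * sinv := by rw [h1]
          _ = ζ * (s * Pi * sinv) := by simp only [Matrix.mul_assoc]
          _ = ζ * (ν * A) := by rw [hsPisinv]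
      calc ζ * Pnu = ζ * (ν * A) := e1
        _ = ζ * (ν * A) * P := by
              rw [Matrix.mul_assoc ζ (ν * A) P, Matrix.mul_assoc ν A P, hAP]
        _ = ζ * Pnu * P := by rw [e1]
        _ = ζ * P := by rw [Matrix.mul_assoc, hPnuP]
    · intro h2
      have e2 : ζ * s = ζ * P * s := by
        calc ζ * s = ζ * (Pnu * s) := by rw [hPnus]
          _ = ζ * Pnu * s := by rw [Matrix.mul_assoc]
          _ = ζ * P * s := by rw [h2]
      calc ζ * s * Pi = ζ * P * s * Pi := by rw [← e2]
        _ = ζ * (P * s * Pi) := by simp only [Matrix.mul_assoc]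
        _ = ζ * (P * s) := by rw [hPsPi]
        _ = ζ * s := by rw [← Matrix.mul_assoc, ← e2]
  exact ⟨(E1.trans C1).trans (E2.trans C2).symm, (E2.trans C2).trans (E3.trans C3).symm⟩
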